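/- Let λ > 0 and let J(x) denote the 3×3 Jacobian matrix of the reduced vector field F at x ∈ ℝ³ (variables ordered S, U, P). Then at the critical point P₁ = (−1/(2√3), 0, 0), J(P₁) is the diagonal matrix diag(−1/2, 1/2, −1/2). In particular the linearization at P₁ has eigenvalues −1/2 (in the S and P directions) and +1/2 (in the U direction), so P₁ is hyperbolic of saddle type, unstable both to the future and the past. -/

import Mathlib

/-- The reduced vector field `F : ℝ³ → ℝ³` in the variables `(S, U, P)`. -/
noncomputable def Fvec (lam : ℝ) (x : Fin 3 → ℝ) : Fin 3 → ℝ :=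
  ![-1 / (3 * Real.sqrt 3) - (2 / 3) * x 0 + x 0 ^ 2 / Real.sqrt 3
      + x 1 ^ 2 / Real.sqrt 3 + x 2 ^ 2 / (2 * Real.sqrt 3)
      + 2 * x 0 ^ 3 - x 0 * x 1 ^ 2 + x 0 * x 2 ^ 2,
    x 1 * (1 / 3 - (lam / 2) * x 2 + 2 * x 0 ^ 2 - x 1 ^ 2 + x 2 ^ 2),
    -(2 / 3) * x 2 + lam * x 1 ^ 2 + 2 * x 0 ^ 2 * x 2 - x 1 ^ 2 * x 2
      + x 2 ^ 3]

/-- The Jacobian matrix of `F` at `x`: entry `(i, j)` is the partial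
derivative of the `i`-th component with respect to the `j`-th variable. -/
noncomputable def jac (lam : ℝ) (x : Fin 3 → ℝ) : Matrix (Fin 3) (Fin 3) ℝ :=
  Matrix.of fun i j => deriv (fun s => Fvec lam (Function.update x j s) i) (x j)

lemma deriv_cubic (c0 c1 c2 c3 x : ℝ) :
    deriv (fun s => c0 + c1*s + c2*s^2 + c3*s^3) x = c1 + 2*c2*x + 3*c3*x^2 := by
  have h : HasDerivAt (fun s : ℝ => c0 + c1*s + c2*s^2 + c3*s^3)
      (c1 + 2*c2*x + 3*c3*x^2) x := by
    have h1 := ((hasDerivAt_id x).const_mul c1).const_add c0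
    have h2 := (hasDerivAt_pow 2 x).const_mul c2
    have h3 := (hasDerivAt_pow 3 x).const_mul c3
    refine ((h1.add h2).add h3).congr_deriv ?_
    push_cast; ring
  exact h.deriv

/-- For `λ > 0` the Jacobian of the reduced vector field at
the critical point `P₁ = (−1/(2√3), 0, 0)` is the diagonal matrix
`diag(−1/2, 1/2, −1/2)`; in particular the linearization at `P₁` has
eigenvalues `−1/2` (in the `S`- and `P`-directions) and `+1/2` (in the
`U`-direction), so `P₁` is a hyperbolic saddle, unstable both to the future
and to the past. -/
theorem jacobian_at_P1 (lam : ℝ) (hlam : 0 < lam) :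
    jac lam ![-1 / (2 * Real.sqrt 3), 0, 0]
      = Matrix.diagonal ![-(1 / 2), 1 / 2, -(1 / 2)] := by
  have h3 : Real.sqrt 3 ^ 2 = 3 := Real.sq_sqrt (by norm_num)
  have hne : Real.sqrt 3 ≠ 0 := by positivity
  ext i j
  fin_cases i <;> fin_cases j
  · simp only [jac, Fvec, Matrix.diagonal, Function.update]
    simp
    rw [show (fun s : ℝ => -1 / (3 * Real.sqrt 3) - 2 / 3 * s + s ^ 2 / Real.sqrt 3 + 2 * s ^ 3)
        = (fun s : ℝ => (-1 / (3 * Real.sqrt 3)) + (-(2/3)) * s + (1 / Real.sqrt 3) * s ^ 2 + 2 * s ^ 3)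
        from funext fun s => by ring, deriv_cubic]
    field_simp
    nlinarith [h3]
  · simp only [jac, Fvec, Matrix.diagonal, Function.update]
    simp
    rw [show (fun s : ℝ =>
        -1 / (3 * Real.sqrt 3) - 2 / 3 * (-1 / (2 * Real.sqrt 3)) + (-1 / (2 * Real.sqrt 3)) ^ 2 / Real.sqrt 3
          + s ^ 2 / Real.sqrt 3 + 2 * (-1 / (2 * Real.sqrt 3)) ^ 3 - -1 / (2 * Real.sqrt 3) * s ^ 2)
        = (fun s : ℝ => (-1 / (3 * Real.sqrt 3) - 2 / 3 * (-1 / (2 * Real.sqrt 3)) + (-1 / (2 * Real.sqrt 3)) ^ 2 / Real.sqrt 3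
          + 2 * (-1 / (2 * Real.sqrt 3)) ^ 3) + 0 * s + (1 / Real.sqrt 3 + 1 / (2 * Real.sqrt 3)) * s ^ 2 + 0 * s ^ 3)
        from funext fun s => by ring, deriv_cubic]
    ring
  · simp only [jac, Fvec, Matrix.diagonal, Function.update]
    simp
    rw [show (fun s : ℝ =>
        -1 / (3 * Real.sqrt 3) - 2 / 3 * (-1 / (2 * Real.sqrt 3)) + (-1 / (2 * Real.sqrt 3)) ^ 2 / Real.sqrt 3
          + s ^ 2 / (2 * Real.sqrt 3) + 2 * (-1 / (2 * Real.sqrt 3)) ^ 3 + -1 / (2 * Real.sqrt 3) * s ^ 2)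
        = (fun s : ℝ => (-1 / (3 * Real.sqrt 3) - 2 / 3 * (-1 / (2 * Real.sqrt 3)) + (-1 / (2 * Real.sqrt 3)) ^ 2 / Real.sqrt 3
          + 2 * (-1 / (2 * Real.sqrt 3)) ^ 3) + 0 * s + (1 / (2 * Real.sqrt 3) + -1 / (2 * Real.sqrt 3)) * s ^ 2 + 0 * s ^ 3)
        from funext fun s => by ring, deriv_cubic]
    ring
  · simp only [jac, Fvec, Matrix.diagonal, Function.update]; simp
  · simp only [jac, Fvec, Matrix.diagonal, Function.update]
    simp
    field_simp
    nlinarith [h3]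
  · simp only [jac, Fvec, Matrix.diagonal, Function.update]; simp
  · simp only [jac, Fvec, Matrix.diagonal, Function.update]; simp
  · simp only [jac, Fvec, Matrix.diagonal, Function.update]; simp
  · simp only [jac, Fvec, Matrix.diagonal, Function.update]
    simp
    rw [show (fun s : ℝ => -(2 / 3 * s) + 2 * (-1 / (2 * Real.sqrt 3)) ^ 2 * s + s ^ 3)
        = (fun s : ℝ => 0 + (-(2/3) + 2 * (-1 / (2 * Real.sqrt 3)) ^ 2) * s + 0 * s ^ 2 + 1 * s ^ 3)
        from funext fun s => by ring, deriv_cubic]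
    field_simp
    nlinarith [h3]
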